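/- arXiv:1404.6299 — 2 statements merged into one kernel-verified Lean document; each statement's English description precedes it below -/
import Mathlib

section
/- Let G be a graph without a 2-factor and let (S,T) be a minimum barrier chosen so that h_G(S,T) is smallest among minimum barriers. Let v ∈ T with |𝒞_v| ≥ 2 and |𝒞_{1v}| ≥ 1. Then for every vertex w of any component D ∈ 𝒞_{1v}, the number of edges from w into V(D) ∪ {v} is at least 2. -/
open SimpleGraph

namespace VizingTwoFactor

variable {V : Type*}

/-- The degree of a vertex, as the `ncard` of its neighbor set. -/
noncomputable def ndeg (G : SimpleGraph V) (v : V) : ℕ :=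
  (G.neighborSet v).ncard

/-- `G` is bipartite with parts `X` and `T`. -/
def IsBipartiteWith (G : SimpleGraph V) (X T : Set V) : Prop :=
  Disjoint X T ∧ ∀ u v : V, G.Adj u v → (u ∈ X ∧ v ∈ T) ∨ (u ∈ T ∧ v ∈ X)

/-- The set of neighbors of a set of vertices. -/
def NSet (G : SimpleGraph V) (A : Set V) : Set V :=
  {v | ∃ a ∈ A, G.Adj a v}

/-- `G` has a matching saturating the vertex set `T`. -/
def HasMatchingSaturating (G : SimpleGraph V) (T : Set V) : Prop :=
  ∃ M : G.Subgraph, M.IsMatching ∧ T ⊆ M.verts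

/-- Number of (ordered) adjacent pairs with first coordinate in `A` and second in `B`;
for disjoint `A`, `B` this is the number of edges between `A` and `B`. -/
noncomputable def eBetween (G : SimpleGraph V) (A B : Set V) : ℕ :=
  {p : V × V | p.1 ∈ A ∧ p.2 ∈ B ∧ G.Adj p.1 p.2}.ncard

/-- Number of neighbors of `v` inside `A`. -/
noncomputable def degIn (G : SimpleGraph V) (A : Set V) (v : V) : ℕ :=
  (G.neighborSet v ∩ A).ncard

/-- The vertex set (in `V`) of a connected component of an induced subgraph. -/
def csupp (G : SimpleGraph V) (U : Set V) (C : (G.induce U).ConnectedComponent) : Set V :=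
  Subtype.val '' C.supp

/-- The odd components of `G − (S ∪ T)` w.r.t. `(S,T)`: components sending an odd
number of edges to `T`. -/
noncomputable def oddComps (G : SimpleGraph V) (S T : Set V) :
    Set ((G.induce (S ∪ T)ᶜ).ConnectedComponent) :=
  {C | Odd (eBetween G (csupp G (S ∪ T)ᶜ C) T)}

/-- `h_G(S,T)`: the number of odd components. -/
noncomputable def hNum (G : SimpleGraph V) (S T : Set V) : ℕ :=
  (oddComps G S T).ncard

/-- `δ_G(S,T) = 2|S| + Σ_{v∈T} deg_{G−S}(v) − 2|T| − h_G(S,T)`. -/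
noncomputable def deltaST (G : SimpleGraph V) (S T : Set V) : ℤ :=
  2 * S.ncard + (∑ᶠ v ∈ T, (degIn G Sᶜ v : ℤ)) - 2 * T.ncard - hNum G S T

/-- A barrier. -/
def IsBarrier (G : SimpleGraph V) (S T : Set V) : Prop :=
  Disjoint S T ∧ deltaST G S T ≤ -2

/-- A minimum barrier: minimizes `|S ∪ T|` among barriers. -/
def IsMinBarrier (G : SimpleGraph V) (S T : Set V) : Prop :=
  IsBarrier G S T ∧ ∀ S' T' : Set V, IsBarrier G S' T' → (S ∪ T).ncard ≤ (S' ∪ T').ncard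

/-- `G` has a 2-factor: a spanning subgraph in which every vertex has degree 2. -/
def HasTwoFactor (G : SimpleGraph V) : Prop :=
  ∃ H : SimpleGraph V, H ≤ G ∧ ∀ v : V, ndeg H v = 2

/-- `G` has a proper edge coloring with `k` colors. -/
def HasEdgeColoring (G : SimpleGraph V) (k : ℕ) : Prop :=
  ∃ f : G.edgeSet → Fin k, ∀ e₁ e₂ : G.edgeSet, e₁ ≠ e₂ →
    (∃ v : V, v ∈ (e₁ : Sym2 V) ∧ v ∈ (e₂ : Sym2 V)) → f e₁ ≠ f e₂

/-- The chromatic index `χ'(G)`. -/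
noncomputable def chromIdx (G : SimpleGraph V) : ℕ :=
  sInf {k | HasEdgeColoring G k}

/-- `Δ` is the maximum degree of `G`. -/
def IsMaxDegree (G : SimpleGraph V) (Δ : ℕ) : Prop :=
  (∀ v : V, ndeg G v ≤ Δ) ∧ ∃ v : V, ndeg G v = Δ

/-- `G` is `Δ`-critical: no isolated vertices, maximum degree `Δ`, `χ'(G) = Δ + 1`, and
`χ'(G − e) = Δ` for every edge `e`. -/
def IsDeltaCritical (G : SimpleGraph V) (Δ : ℕ) : Prop :=
  (∀ v : V, ∃ u : V, G.Adj v u) ∧ IsMaxDegree G Δ ∧ chromIdx G = Δ + 1 ∧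
    ∀ e ∈ G.edgeSet, chromIdx (G.deleteEdges {e}) = Δ

/-- `T` is an independent set in `G`. -/
def IsIndep (G : SimpleGraph V) (T : Set V) : Prop :=
  ∀ u ∈ T, ∀ v ∈ T, ¬ G.Adj u v

/-- The bipartite graph `H*` consisting of the edges of `G` between `V(G) \ T` and `T`. -/
def betweenGraph (G : SimpleGraph V) (T : Set V) : SimpleGraph V where
  Adj u v := G.Adj u v ∧ ((u ∉ T ∧ v ∈ T) ∨ (u ∈ T ∧ v ∉ T))
  symm := ⟨fun u v h => ⟨h.1.symm, h.2.elim (fun h' => Or.inr ⟨h'.2, h'.1⟩)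
    (fun h' => Or.inl ⟨h'.2, h'.1⟩)⟩⟩
  loopless := ⟨fun u h => G.loopless.irrefl u h.1⟩

def ReachIn (G : SimpleGraph V) (A : Set V) (a b : V) : Prop :=
  ∃ p : G.Walk a b, ∀ x ∈ p.support, x ∈ A

def IsCompOf (G : SimpleGraph V) (A K : Set V) : Prop :=
  ∃ y ∈ K, ∀ z, z ∈ K ↔ ReachIn G A y z

variable {G : SimpleGraph V} {A B K K₁ K₂ : Set V} {a b c w : V}

lemma reachIn_refl (ha : a ∈ A) : ReachIn G A a a :=
  ⟨Walk.nil, by simp [ha]⟩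

lemma ReachIn.mem_left (h : ReachIn G A a b) : a ∈ A := by
  obtain ⟨p, hp⟩ := h; exact hp _ p.start_mem_support

lemma ReachIn.mem_right (h : ReachIn G A a b) : b ∈ A := by
  obtain ⟨p, hp⟩ := h; exact hp _ p.end_mem_support

lemma ReachIn.symm (h : ReachIn G A a b) : ReachIn G A b a := by
  obtain ⟨p, hp⟩ := h
  exact ⟨p.reverse, by simpa using hp⟩

lemma ReachIn.trans (h : ReachIn G A a b) (h' : ReachIn G A b c) : ReachIn G A a c := by
  obtain ⟨p, hp⟩ := h; obtain ⟨q, hq⟩ := h'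
  refine ⟨p.append q, ?_⟩
  intro x hx
  rcases (Walk.mem_support_append_iff _ _).1 hx with h | h
  · exact hp _ h
  · exact hq _ h

lemma ReachIn.adj (h : ReachIn G A a b) (hbc : G.Adj b c) (hc : c ∈ A) : ReachIn G A a c :=
  h.trans ⟨hbc.toWalk, by simp [h.mem_right, hc]⟩

lemma ReachIn.mono (hAB : A ⊆ B) (h : ReachIn G A a b) : ReachIn G B a b := by
  obtain ⟨p, hp⟩ := h; exact ⟨p, fun x hx => hAB (hp x hx)⟩

lemma ReachIn.self_set (h : ReachIn G A a b) : ReachIn G {z | ReachIn G A a z} a b := by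
  classical
  obtain ⟨p, hp⟩ := h
  refine ⟨p, fun x hx => ⟨p.takeUntil x hx, fun y hy => hp _ (p.support_takeUntil_subset hx hy)⟩⟩

lemma reachIn_closed (hK : ∀ x ∈ K, ∀ y, G.Adj x y → y ∈ A → y ∈ K)
    (ha : a ∈ K) (h : ReachIn G A a b) : b ∈ K := by
  obtain ⟨p, hp⟩ := h
  induction p with
  | nil => exact ha
  | @cons u x z hadj q ih =>
    refine ih (hK _ ha _ hadj (hp _ ?_)) fun t ht => hp _ ?_
    · simp
    · simp [ht]

lemma reachIn_delete_aux (hw : (G.neighborSet w ∩ A).Subsingleton) :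
    ∀ n (a b : V) (p : G.Walk a b), p.length ≤ n → (∀ x ∈ p.support, x ∈ A) →
      a ≠ w → b ≠ w → ReachIn G (A \ {w}) a b := by
  intro n
  induction n with
  | zero =>
    intro a b p hlen hp ha hb
    cases p with
    | nil => exact ⟨Walk.nil, by simp [Set.mem_diff, hp a (by simp), ha]⟩
    | cons hadj q => simp at hlen
  | succ n ih =>
    intro a b p hlen hp ha hb
    cases p with
    | nil => exact ⟨Walk.nil, by simp [Set.mem_diff, hp a (by simp), ha]⟩
    | @cons u x z hadj q =>
      by_cases hxw : x = w
      · subst hxw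
        cases q with
        | nil => exact absurd rfl hb
        | @cons u' d z' hadj2 r =>
          have had : a = d := hw ⟨hadj.symm, hp _ (by simp)⟩ ⟨hadj2, hp _ (by simp)⟩
          subst had
          refine ih a b r (by simp at hlen; omega) (fun t ht => hp _ (by simp [ht])) ha hb
      · have hrest : ReachIn G (A \ {w}) x b :=
          ih x b q (by simp at hlen; omega) (fun t ht => hp _ (by simp [ht])) hxw hb
        obtain ⟨q', hq'⟩ := hrest
        exact ⟨Walk.cons hadj q', by
          intro t ht
          rcases (by simpa using ht : t = a ∨ t ∈ q'.support) with rfl | h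
          · exact ⟨hp _ (by simp), ha⟩
          · exact hq' _ h⟩

lemma reachIn_delete (hw : (G.neighborSet w ∩ A).Subsingleton)
    (h : ReachIn G A a b) (ha : a ≠ w) (hb : b ≠ w) : ReachIn G (A \ {w}) a b := by
  obtain ⟨p, hp⟩ := h
  exact reachIn_delete_aux hw p.length a b p le_rfl hp ha hb

lemma isCompOf_reach (ha : a ∈ A) : IsCompOf G A {z | ReachIn G A a z} :=
  ⟨a, reachIn_refl ha, fun _ => Iff.rfl⟩

lemma IsCompOf.nonempty (h : IsCompOf G A K) : K.Nonempty := by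
  obtain ⟨y, hy, -⟩ := h; exact ⟨y, hy⟩

lemma IsCompOf.subset (h : IsCompOf G A K) : K ⊆ A := by
  obtain ⟨y, hy, hspec⟩ := h
  intro z hz; exact ((hspec z).1 hz).mem_right

lemma IsCompOf.spec (h : IsCompOf G A K) (hz : b ∈ K) : ∀ t, t ∈ K ↔ ReachIn G A b t := by
  obtain ⟨y, hy, hspec⟩ := h
  intro t
  constructor
  · intro ht; exact ((hspec b).1 hz).symm.trans ((hspec t).1 ht)
  · intro ht; exact (hspec t).2 (((hspec b).1 hz).trans ht)

lemma IsCompOf.eq_of_mem (h₁ : IsCompOf G A K₁) (h₂ : IsCompOf G A K₂)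
    (hz₁ : b ∈ K₁) (hz₂ : b ∈ K₂) : K₁ = K₂ := by
  ext t
  rw [h₁.spec hz₁ t, h₂.spec hz₂ t]

lemma IsCompOf.adj_mem (h : IsCompOf G A K) (hz : b ∈ K) (hbc : G.Adj b c) (hc : c ∈ A) :
    c ∈ K := by
  rw [h.spec hz c]
  exact (reachIn_refl (h.subset hz)).adj hbc hc

lemma IsCompOf.reachIn_self (h : IsCompOf G A K) (hb : b ∈ K) (hc : c ∈ K) :
    ReachIn G K b c := by
  have h1 : ReachIn G A b c := (h.spec hb c).1 hc
  have := h1.self_set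
  refine this.mono ?_
  intro z hz; exact (h.spec hb z).2 hz

lemma IsCompOf.exists_adj (h : IsCompOf G A K) (hw : w ∈ K) (hb : b ∈ K) (hbw : b ≠ w) :
    ∃ u ∈ K, G.Adj w u := by
  obtain ⟨p, hp⟩ := (h.spec hw b).1 hb
  cases p with
  | nil => exact absurd rfl hbw.symm
  | @cons u x z hadj q =>
    exact ⟨x, h.adj_mem hw hadj (hp _ (by simp)), hadj⟩



section Bridge
variable {U : Set V}


lemma reachable_induce_of_reachIn :
    ∀ {a b : V} (p : G.Walk a b), (∀ x ∈ p.support, x ∈ U) →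
      ∀ (ha : a ∈ U) (hb : b ∈ U), (G.induce U).Reachable ⟨a, ha⟩ ⟨b, hb⟩ := by
  intro a b p
  induction p with
  | nil => intro _ ha hb; rfl
  | @cons u x z hadj q ih =>
    intro hp ha hb
    have hx : x ∈ U := hp _ (by simp)
    have h1 : (G.induce U).Adj ⟨u, ha⟩ ⟨x, hx⟩ := hadj
    exact h1.reachable.trans (ih (fun t ht => hp _ (by simp [ht])) hx hb)

lemma reachIn_of_reachable_induce {a b : U} (h : (G.induce U).Reachable a b) :
    ReachIn G U (a : V) (b : V) := by
  obtain ⟨p⟩ := h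
  induction p with
  | nil => exact ⟨Walk.nil, by simp⟩
  | @cons u x z hadj q ih =>
    obtain ⟨q', hq'⟩ := ih
    have hadj' : G.Adj (u : V) (x : V) := hadj
    exact ⟨Walk.cons hadj' q', by
      intro t ht
      rcases (by simpa using ht : t = (u : V) ∨ t ∈ q'.support) with rfl | h
      · exact u.2
      · exact hq' _ h⟩

lemma reachable_induce_iff {a b : V} (ha : a ∈ U) (hb : b ∈ U) :
    (G.induce U).Reachable ⟨a, ha⟩ ⟨b, hb⟩ ↔ ReachIn G U a b :=
  ⟨fun h => reachIn_of_reachable_induce h, fun ⟨p, hp⟩ => reachable_induce_of_reachIn p hp ha hb⟩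


end Bridge


section Csupp
variable {G : SimpleGraph V} {U : Set V}

lemma mem_csupp {C : (G.induce U).ConnectedComponent} {z : V} :
    z ∈ csupp G U C ↔ ∃ hz : z ∈ U, (G.induce U).connectedComponentMk ⟨z, hz⟩ = C := by
  constructor
  · rintro ⟨⟨z', hz'⟩, hmem, rfl⟩
    exact ⟨hz', (ConnectedComponent.mem_supp_iff _ _).1 hmem⟩
  · rintro ⟨hz, hC⟩
    exact ⟨⟨z, hz⟩, (ConnectedComponent.mem_supp_iff _ _).2 hC, rfl⟩

lemma csupp_isCompOf (C : (G.induce U).ConnectedComponent) : IsCompOf G U (csupp G U C) := by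
  obtain ⟨y, hy⟩ := C.exists_rep
  refine ⟨(y : V), mem_csupp.2 ⟨y.2, by rwa [Subtype.coe_eta]⟩, ?_⟩
  intro z
  rw [mem_csupp]
  constructor
  · rintro ⟨hz, hC⟩
    refine (reachable_induce_iff y.2 hz).1 ?_
    have := ConnectedComponent.eq.1 (hC.trans hy.symm)
    simpa using this.symm
  · intro h
    refine ⟨h.mem_right, ?_⟩
    rw [← hy]
    refine ConnectedComponent.eq.2 ?_
    have := (reachable_induce_iff y.2 h.mem_right).2 h
    simpa using this.symm

lemma isCompOf_exists_csupp {K : Set V} (h : IsCompOf G U K) :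
    ∃ C : (G.induce U).ConnectedComponent, csupp G U C = K := by
  obtain ⟨y, hy, hspec⟩ := h
  have hyU : y ∈ U := ((hspec y).1 hy).mem_left
  refine ⟨(G.induce U).connectedComponentMk ⟨y, hyU⟩, ?_⟩
  ext z
  rw [mem_csupp, hspec z]
  constructor
  · rintro ⟨hz, hC⟩
    exact (reachable_induce_iff hyU hz).1 (ConnectedComponent.eq.1 hC).symm
  · intro h
    exact ⟨h.mem_right, (ConnectedComponent.eq.2 ((reachable_induce_iff hyU h.mem_right).2 h).symm)⟩

lemma csupp_injective : Function.Injective (csupp G U) := by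
  intro C₁ C₂ h
  obtain ⟨y, hy⟩ := C₁.exists_rep
  have hymem : (y : V) ∈ csupp G U C₁ := mem_csupp.2 ⟨y.2, by rwa [Subtype.coe_eta]⟩
  rw [h] at hymem
  obtain ⟨hz, hC⟩ := mem_csupp.1 hymem
  rw [← hC, ← hy]
  congr 1

lemma ncard_comp_eq (Q : Set V → Prop) :
    {C : (G.induce U).ConnectedComponent | Q (csupp G U C)}.ncard
      = {K : Set V | IsCompOf G U K ∧ Q K}.ncard := by
  rw [← Set.ncard_image_of_injOn (f := csupp G U) (csupp_injective.injOn)]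
  congr 1
  ext K
  constructor
  · rintro ⟨C, hQ, rfl⟩
    exact ⟨csupp_isCompOf C, hQ⟩
  · rintro ⟨hK, hQ⟩
    obtain ⟨C, rfl⟩ := isCompOf_exists_csupp hK
    exact ⟨C, hQ, rfl⟩

lemma sUnion_comps : ⋃₀ {K : Set V | IsCompOf G U K} = U := by
  apply subset_antisymm
  · rintro z ⟨K, hK, hz⟩
    exact hK.subset hz
  · intro z hz
    exact ⟨{t | ReachIn G U z t}, isCompOf_reach hz, reachIn_refl hz⟩

lemma comps_pairwiseDisjoint :
    {K : Set V | IsCompOf G U K}.PairwiseDisjoint id := by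
  intro K₁ h₁ K₂ h₂ hne
  rw [Function.onFun, Set.disjoint_left]
  intro z hz₁ hz₂
  exact hne (h₁.eq_of_mem h₂ hz₁ hz₂)

end Csupp


section Arith
variable [Fintype V] {G : SimpleGraph V} {A B : Set V} {a b x : V}

lemma degIn_union (h : Disjoint A B) (x : V) :
    degIn G (A ∪ B) x = degIn G A x + degIn G B x := by
  classical
  unfold degIn
  rw [Set.inter_union_distrib_left]
  exact Set.ncard_union_eq (h.mono inf_le_right inf_le_right) (Set.toFinite _) (Set.toFinite _)

lemma degIn_insert (h : a ∉ A) (x : V) :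
    degIn G (insert a A) x = degIn G {a} x + degIn G A x := by
  rw [← Set.singleton_union, degIn_union (Set.disjoint_singleton_left.2 h)]

lemma degIn_singleton_comm : degIn G {b} a = degIn G {a} b := by
  unfold degIn
  by_cases h : G.Adj a b
  · rw [show G.neighborSet a ∩ {b} = {b} by simp [Set.inter_eq_right, h],
      show G.neighborSet b ∩ {a} = {a} by simp [Set.inter_eq_right, h.symm]]
    simp [Set.ncard_singleton]
  · rw [show G.neighborSet a ∩ {b} = ∅ by
        rw [Set.eq_empty_iff_forall_notMem]; rintro t ⟨h1, rfl⟩; exact h h1,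
      show G.neighborSet b ∩ {a} = ∅ by
        rw [Set.eq_empty_iff_forall_notMem]; rintro t ⟨h1, rfl⟩; exact h h1.symm]

lemma degIn_diff_self (A : Set V) (x : V) : degIn G (A \ {x}) x = degIn G A x := by
  unfold degIn
  congr 1
  ext t
  simp only [Set.mem_inter_iff, Set.mem_diff, Set.mem_singleton_iff, mem_neighborSet]
  constructor
  · rintro ⟨h1, h2, -⟩; exact ⟨h1, h2⟩
  · rintro ⟨h1, h2⟩; exact ⟨h1, h2, fun h => G.irrefl (h ▸ h1)⟩

lemma degIn_le_one_subsingleton (h : degIn G A x ≤ 1) :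
    (G.neighborSet x ∩ A).Subsingleton := by
  intro p hp q hq
  exact (Set.ncard_le_one_iff (Set.toFinite _)).1 h hp hq

lemma eBetween_union_left (h : Disjoint A B) (C : Set V) :
    eBetween G (A ∪ B) C = eBetween G A C + eBetween G B C := by
  unfold eBetween
  rw [show {p : V × V | p.1 ∈ A ∪ B ∧ p.2 ∈ C ∧ G.Adj p.1 p.2}
      = {p : V × V | p.1 ∈ A ∧ p.2 ∈ C ∧ G.Adj p.1 p.2}
        ∪ {p : V × V | p.1 ∈ B ∧ p.2 ∈ C ∧ G.Adj p.1 p.2} by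
    ext p; simp [Set.mem_union]; tauto]
  refine Set.ncard_union_eq ?_ (Set.toFinite _) (Set.toFinite _)
  rw [Set.disjoint_left]
  rintro p ⟨h1, -, -⟩ ⟨h2, -, -⟩
  exact (Set.disjoint_left.1 h) h1 h2

lemma eBetween_union_right (h : Disjoint B C) (A : Set V) :
    eBetween G A (B ∪ C) = eBetween G A B + eBetween G A C := by
  unfold eBetween
  rw [show {p : V × V | p.1 ∈ A ∧ p.2 ∈ B ∪ C ∧ G.Adj p.1 p.2}
      = {p : V × V | p.1 ∈ A ∧ p.2 ∈ B ∧ G.Adj p.1 p.2}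
        ∪ {p : V × V | p.1 ∈ A ∧ p.2 ∈ C ∧ G.Adj p.1 p.2} by
    ext p; simp [Set.mem_union]; tauto]
  refine Set.ncard_union_eq ?_ (Set.toFinite _) (Set.toFinite _)
  rw [Set.disjoint_left]
  rintro p ⟨-, h1, -⟩ ⟨-, h2, -⟩
  exact (Set.disjoint_left.1 h) h1 h2

lemma eBetween_singleton_left (a : V) (B : Set V) : eBetween G {a} B = degIn G B a := by
  unfold eBetween degIn
  rw [show {p : V × V | p.1 ∈ ({a} : Set V) ∧ p.2 ∈ B ∧ G.Adj p.1 p.2}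
      = (fun y => (a, y)) '' (G.neighborSet a ∩ B) by
    ext p
    simp only [Set.mem_setOf_eq, Set.mem_singleton_iff, Set.mem_image, Set.mem_inter_iff,
      mem_neighborSet]
    constructor
    · rintro ⟨rfl, h2, h3⟩; exact ⟨p.2, ⟨h3, h2⟩, rfl⟩
    · rintro ⟨y, ⟨h3, h2⟩, rfl⟩; exact ⟨rfl, h2, h3⟩]
  exact Set.ncard_image_of_injective _ (fun y z h => congrArg Prod.snd h)

lemma eBetween_singleton_right (A : Set V) (b : V) : eBetween G A {b} = degIn G A b := by
  unfold eBetween degIn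
  rw [show {p : V × V | p.1 ∈ A ∧ p.2 ∈ ({b} : Set V) ∧ G.Adj p.1 p.2}
      = (fun y => (y, b)) '' (G.neighborSet b ∩ A) by
    ext p
    simp only [Set.mem_setOf_eq, Set.mem_singleton_iff, Set.mem_image, Set.mem_inter_iff,
      mem_neighborSet]
    constructor
    · rintro ⟨h1, rfl, h3⟩; exact ⟨p.1, ⟨h3.symm, h1⟩, rfl⟩
    · rintro ⟨y, ⟨h3, h1⟩, rfl⟩; exact ⟨h1, rfl, h3.symm⟩]
  exact Set.ncard_image_of_injective _ (fun y z h => congrArg Prod.fst h)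

lemma eBetween_insert_left (h : a ∉ A) (B : Set V) :
    eBetween G (insert a A) B = degIn G B a + eBetween G A B := by
  rw [← Set.singleton_union, eBetween_union_left (Set.disjoint_singleton_left.2 h) B, eBetween_singleton_left]

lemma eBetween_insert_right (h : b ∉ B) (A : Set V) :
    eBetween G A (insert b B) = degIn G A b + eBetween G A B := by
  rw [← Set.singleton_union, eBetween_union_right (Set.disjoint_singleton_left.2 h) A, eBetween_singleton_right]

end Arith

section Sums
variable [Fintype V] {G : SimpleGraph V}

lemma eBetween_sUnion (B : Set V) (𝒜 : Set (Set V)) (hdisj : 𝒜.PairwiseDisjoint id) :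
    eBetween G (⋃₀ 𝒜) B = ∑ᶠ K ∈ 𝒜, eBetween G K B := by
  classical
  refine Set.Finite.induction_on
    (motive := fun s _ => s.PairwiseDisjoint id → eBetween G (⋃₀ s) B = ∑ᶠ K ∈ s, eBetween G K B)
    𝒜 (Set.toFinite 𝒜) ?_ ?_ hdisj
  · intro _
    rw [Set.sUnion_empty, finsum_mem_empty]
    unfold eBetween
    convert Set.ncard_empty (V × V)
    rw [Set.eq_empty_iff_forall_notMem]; rintro p ⟨h, -⟩; exact h
  · intro a s ha hs ih hdisj
    have hdisj' : s.PairwiseDisjoint id := hdisj.subset (Set.subset_insert a s)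
    have hd : Disjoint a (⋃₀ s) := by
      rw [Set.disjoint_sUnion_right]
      intro t ht
      exact hdisj (Set.mem_insert a s) (Set.mem_insert_of_mem a ht) (fun he => ha (he ▸ ht))
    rw [Set.sUnion_insert, eBetween_union_left hd, ih hdisj',
      show insert a s = {a} ∪ s from rfl,
      finsum_mem_union (Set.disjoint_singleton_left.2 ha) (Set.finite_singleton a) hs,
      finsum_mem_singleton]

lemma finsum_parity (𝒜 : Set (Set V)) (f : Set V → ℕ) :
    (∑ᶠ K ∈ 𝒜, f K) % 2 = {K ∈ 𝒜 | Odd (f K)}.ncard % 2 := by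
  classical
  refine Set.Finite.induction_on
    (motive := fun s _ => (∑ᶠ K ∈ s, f K) % 2 = {K ∈ s | Odd (f K)}.ncard % 2)
    𝒜 (Set.toFinite 𝒜) ?_ ?_
  · rw [finsum_mem_empty]; congr 1
    rw [show {K ∈ (∅ : Set (Set V)) | Odd (f K)} = ∅ by simp, Set.ncard_empty]
  · intro a s ha hs ih
    rw [show insert a s = {a} ∪ s from rfl,
      finsum_mem_union (Set.disjoint_singleton_left.2 ha) (Set.finite_singleton a) hs,
      finsum_mem_singleton]
    by_cases hodd : Odd (f a)
    · have : {K ∈ ({a} : Set (Set V)) ∪ s | Odd (f K)} = insert a {K ∈ s | Odd (f K)} := by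
        ext K; simp only [Set.mem_union, Set.mem_singleton_iff, Set.mem_setOf_eq,
          Set.mem_insert_iff]
        constructor
        · rintro ⟨rfl | hK, ho⟩
          · exact Or.inl rfl
          · exact Or.inr ⟨hK, ho⟩
        · rintro (rfl | ⟨hK, ho⟩)
          · exact ⟨Or.inl rfl, hodd⟩
          · exact ⟨Or.inr hK, ho⟩
      rw [this, Set.ncard_insert_of_notMem (fun hmem => ha hmem.1) (Set.toFinite _)]
      have h1 := Nat.odd_iff.1 hodd
      omega
    · have : {K ∈ ({a} : Set (Set V)) ∪ s | Odd (f K)} = {K ∈ s | Odd (f K)} := by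
        ext K; simp only [Set.mem_union, Set.mem_singleton_iff, Set.mem_setOf_eq]
        constructor
        · rintro ⟨rfl | hK, ho⟩
          · exact absurd ho hodd
          · exact ⟨hK, ho⟩
        · rintro ⟨hK, ho⟩; exact ⟨Or.inr hK, ho⟩
      rw [this]
      have h1 := Nat.even_iff.1 (Nat.not_odd_iff_even.1 hodd)
      omega

end Sums

lemma core [Fintype V] (G : SimpleGraph V) (S T : Set V)
    (hmin : IsMinBarrier G S T)
    (hh : ∀ S' T' : Set V, IsMinBarrier G S' T' → hNum G S T ≤ hNum G S' T')
    (v : V) (hv : v ∈ T)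
    (hCv2 : 2 ≤ {K₀ : Set V | IsCompOf G (S ∪ T)ᶜ K₀ ∧ Odd (eBetween G K₀ T)
      ∧ degIn G K₀ v = 1}.ncard)
    (K : Set V) (hKcomp0 : IsCompOf G (S ∪ T)ᶜ K)
    (hDe : eBetween G K T = 1) (hDv : degIn G K v = 1)
    (w : V) (hw : w ∈ K) :
    2 ≤ degIn G (K ∪ {v}) w := by
  classical
  by_contra hlt
  push_neg at hlt
  set U : Set V := (S ∪ T)ᶜ with hU
  have hKcomp : IsCompOf G U K := hKcomp0
  have hDisjST : Disjoint S T := hmin.1.1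
  have hwU : w ∈ U := hKcomp.subset hw
  have hvS : v ∉ S := Set.disjoint_right.1 hDisjST hv
  have hvU : v ∉ U := by
    rw [hU]; simp only [Set.mem_compl_iff, Set.mem_union, not_or, not_not]
    intro hcon; exact hcon.2 hv
  have hmemU : ∀ z : V, z ∈ U ↔ z ∉ S ∧ z ∉ T := by
    intro z; rw [hU]; simp [Set.mem_compl_iff, Set.mem_union, not_or]
  have hwS : w ∉ S := ((hmemU w).1 hwU).1
  have hwT : w ∉ T := ((hmemU w).1 hwU).2
  have hwv : w ≠ v := fun h => hvU (h ▸ hwU)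
  -- the unique edge between K and T
  obtain ⟨x, hxeq⟩ := Set.ncard_eq_one.1 hDv
  have hxmem : x ∈ G.neighborSet v ∩ K := hxeq ▸ Set.mem_singleton x
  have hxK : x ∈ K := hxmem.2
  have hvx : G.Adj v x := hxmem.1
  obtain ⟨p₀, hp₀⟩ := Set.ncard_eq_one.1 hDe
  have hp₀eq : p₀ = (x, v) := by
    have : (x, v) ∈ {p : V × V | p.1 ∈ K ∧ p.2 ∈ T ∧ G.Adj p.1 p.2} := ⟨hxK, hv, hvx.symm⟩
    rw [hp₀] at this; exact (Set.mem_singleton_iff.1 this).symm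
  have hKT : ∀ z t : V, z ∈ K → t ∈ T → G.Adj z t → z = x ∧ t = v := by
    intro z t hz ht hadj
    have : (z, t) ∈ {p : V × V | p.1 ∈ K ∧ p.2 ∈ T ∧ G.Adj p.1 p.2} := ⟨hz, ht, hadj⟩
    rw [hp₀, hp₀eq] at this
    have := Set.mem_singleton_iff.1 this
    exact ⟨congrArg Prod.fst this, congrArg Prod.snd this⟩
  -- the degree of w in G - S equals its degree in K ∪ {v}
  have hnbrw : G.neighborSet w ∩ Sᶜ = G.neighborSet w ∩ (K ∪ {v}) := by
    ext z
    simp only [Set.mem_inter_iff, mem_neighborSet, Set.mem_compl_iff, Set.mem_union,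
      Set.mem_singleton_iff]
    constructor
    · rintro ⟨hadj, hzS⟩
      refine ⟨hadj, ?_⟩
      by_cases hzT : z ∈ T
      · exact Or.inr (hKT w z hw hzT hadj).2
      · exact Or.inl (hKcomp.adj_mem hw hadj ((hmemU z).2 ⟨hzS, hzT⟩))
    · rintro ⟨hadj, hz | rfl⟩
      · exact ⟨hadj, ((hmemU z).1 (hKcomp.subset hz)).1⟩
      · exact ⟨hadj, hvS⟩
  have hdegScw : degIn G Sᶜ w = degIn G (K ∪ {v}) w := by
    unfold degIn; rw [hnbrw]
  have hdegw_le : degIn G (K ∪ {v}) w ≤ 1 := by omega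
  -- if x = w then K = {w}
  have hxw_spec : x = w → K = {w} := by
    intro hxw
    by_contra hne
    have hex : ∃ z ∈ K, z ≠ w := by
      by_contra hall
      push_neg at hall
      apply hne
      apply subset_antisymm
      · intro z hz; exact hall z hz
      · intro z hz; rwa [Set.mem_singleton_iff.1 hz]
    obtain ⟨z, hzK, hzw⟩ := hex
    obtain ⟨u, huK, hwu⟩ := hKcomp.exists_adj hw hzK hzw
    have hu1 : u ∈ G.neighborSet w ∩ (K ∪ {v}) := ⟨hwu, Or.inl huK⟩
    have hv1 : v ∈ G.neighborSet w ∩ (K ∪ {v}) := ⟨(hxw ▸ hvx).symm, Or.inr rfl⟩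
    have huv : u = v := (Set.ncard_le_one_iff (Set.toFinite _)).1 hdegw_le hu1 hv1
    exact hvU (huv ▸ hKcomp.subset huK)
  have hdegw : degIn G (K ∪ {v}) w = 1 := by
    refine le_antisymm hdegw_le ?_
    by_cases hex : ∃ z ∈ K, z ≠ w
    · obtain ⟨z, hzK, hzw⟩ := hex
      obtain ⟨u, huK, hwu⟩ := hKcomp.exists_adj hw hzK hzw
      have : 0 < degIn G (K ∪ {v}) w :=
        (Set.ncard_pos (Set.toFinite _)).2 ⟨u, hwu, Or.inl huK⟩
      omega
    · push_neg at hex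
      have hxw : x = w := hex x hxK
      have : 0 < degIn G (K ∪ {v}) w :=
        (Set.ncard_pos (Set.toFinite _)).2 ⟨v, (hxw ▸ hvx).symm, Or.inr rfl⟩
      omega
  have hdegScw1 : degIn G Sᶜ w = 1 := by rw [hdegScw, hdegw]
  -- subsingleton of neighbors of w in U
  have hsub : (G.neighborSet w ∩ U).Subsingleton := by
    have h1 : (G.neighborSet w ∩ Sᶜ).Subsingleton :=
      degIn_le_one_subsingleton (le_of_eq hdegScw1)
    refine h1.anti (Set.inter_subset_inter_right _ ?_)
    intro z hz; exact ((hmemU z).1 hz).1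
  -- the new pair
  set T' : Set V := insert w (T \ {v}) with hT'def
  set U' : Set V := insert v (U \ {w}) with hU'def
  have hwT' : w ∉ T \ {v} := fun h => hwT h.1
  have hvU'mem : v ∈ U' := Set.mem_insert v _
  have hUsub : U \ {w} ⊆ U' := Set.subset_insert v _
  have hcompl : (S ∪ T')ᶜ = U' := by
    ext z
    simp only [Set.mem_compl_iff, Set.mem_union, hT'def, hU'def, Set.mem_insert_iff,
      Set.mem_diff, Set.mem_singleton_iff, not_or]
    constructor
    · rintro ⟨hzS, hzw, hzT⟩
      by_cases hzv : z = v
      · exact Or.inl hzv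
      · exact Or.inr ⟨(hmemU z).2 ⟨hzS, fun ht => hzT ⟨ht, hzv⟩⟩, hzw⟩
    · rintro (rfl | ⟨hzU, hzw⟩)
      · exact ⟨hvS, hwv.symm, fun hcon => hcon.2 rfl⟩
      · exact ⟨((hmemU z).1 hzU).1, hzw, fun hcon => ((hmemU z).1 hzU).2 hcon.1⟩
  -- component families
  set 𝒦 : Set (Set V) := {K₀ | IsCompOf G U K₀} with h𝒦def
  set 𝒦' : Set (Set V) := {K₀ | IsCompOf G U' K₀} with h𝒦'def
  set Aall : Set (Set V) := {K₀ | IsCompOf G U K₀ ∧ degIn G K₀ v ≠ 0} with hAalldef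
  set Kstar : Set V := {z | ReachIn G U' v z} with hKstardef
  have hKstarcomp : IsCompOf G U' Kstar := isCompOf_reach hvU'mem
  have hvKstar : v ∈ Kstar := reachIn_refl hvU'mem
  -- preserved components
  have hP1 : ∀ K₀, IsCompOf G U K₀ → degIn G K₀ v = 0 → w ∉ K₀ → IsCompOf G U' K₀ := by
    intro K₀ hc hdeg hwK
    have hsubU' : K₀ ⊆ U' := by
      intro z hz
      exact hUsub ⟨hc.subset hz, fun hzw => hwK (hzw ▸ hz)⟩
    have hclosed : ∀ a ∈ K₀, ∀ b, G.Adj a b → b ∈ U' → b ∈ K₀ := by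
      intro a ha b hab hbU'
      rcases Set.mem_insert_iff.1 hbU' with rfl | hbU
      · exfalso
        have : 0 < degIn G K₀ b := (Set.ncard_pos (Set.toFinite _)).2 ⟨a, hab.symm, ha⟩
        omega
      · exact hc.adj_mem ha hab hbU.1
    obtain ⟨y, hy, -⟩ := id hc
    refine ⟨y, hy, fun z => ⟨fun hz => ?_, fun hz => reachIn_closed hclosed hy hz⟩⟩
    exact (hc.reachIn_self hy hz).mono hsubU'
  have hwK_eq : ∀ K₀, IsCompOf G U K₀ → w ∈ K₀ → K₀ = K := by
    intro K₀ hc hwK₀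
    exact hc.eq_of_mem hKcomp hwK₀ hw
  have hnotA : ∀ K₀ ∈ 𝒦 \ Aall, degIn G K₀ v = 0 ∧ w ∉ K₀ := by
    rintro K₀ ⟨hc, hnA⟩
    have hdeg : degIn G K₀ v = 0 := by
      by_contra hne
      exact hnA ⟨hc, hne⟩
    refine ⟨hdeg, fun hwK₀ => ?_⟩
    rw [hwK_eq K₀ hc hwK₀] at hdeg
    rw [hdeg] at hDv
    exact one_ne_zero hDv.symm
  -- converse classification
  have hP3 : ∀ K', IsCompOf G U' K' → v ∉ K' → K' ∈ 𝒦 \ Aall := by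
    intro K' hc' hvK'
    obtain ⟨y, hy, -⟩ := id hc'
    have hc'2 : IsCompOf G U' K' := hc'
    have hyU' : y ∈ U' := hc'2.subset hy
    have hyv : y ≠ v := fun h => hvK' (h ▸ hy)
    have hyUw : y ∈ U \ {w} := by
      rcases Set.mem_insert_iff.1 hyU' with h | h
      · exact absurd h hyv
      · exact h
    have hyU : y ∈ U := hyUw.1
    have hyw : y ≠ w := hyUw.2
    set K₀ : Set V := {z | ReachIn G U y z} with hK₀def
    have hcK₀ : IsCompOf G U K₀ := isCompOf_reach hyU
    have hyK₀ : y ∈ K₀ := reachIn_refl hyU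
    have hnoadj : degIn G K₀ v = 0 := by
      by_contra hne
      obtain ⟨x', hx'⟩ := Set.nonempty_of_ncard_ne_zero hne
      have hx'K₀ : x' ∈ K₀ := hx'.2
      have hvx' : G.Adj v x' := hx'.1
      have hreach : ReachIn G U' y x' := by
        by_cases hwK₀ : w ∈ K₀
        · have hK₀K : K₀ = K := hwK_eq K₀ hcK₀ hwK₀
          have hx'x : x' = x := by
            have : x' ∈ G.neighborSet v ∩ K := ⟨hvx', hK₀K ▸ hx'K₀⟩
            rw [hxeq] at this; exact Set.mem_singleton_iff.1 this
          have hxw : x ≠ w := by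
            intro hxw
            have hKsing : K = {w} := hxw_spec hxw
            rw [hK₀K, hKsing] at hyK₀
            exact hyw (Set.mem_singleton_iff.1 hyK₀)
          have hrU : ReachIn G U y x := (hcK₀.spec hyK₀ x).1 (by rw [hK₀K]; exact hxK)
          have := reachIn_delete hsub hrU hyw hxw
          rw [hx'x]
          exact this.mono hUsub
        · have hrK : ReachIn G K₀ y x' := hcK₀.reachIn_self hyK₀ hx'K₀
          refine hrK.mono ?_
          intro z hz
          exact hUsub ⟨hcK₀.subset hz, fun hzw => hwK₀ (hzw ▸ hz)⟩
      have : v ∈ K' := (hc'2.spec hy v).2 (hreach.adj hvx'.symm hvU'mem)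
      exact hvK' this
    have hwK₀ : w ∉ K₀ := by
      intro hwK₀
      rw [hwK_eq K₀ hcK₀ hwK₀] at hnoadj
      rw [hnoadj] at hDv
      exact one_ne_zero hDv.symm
    have hcomp' : IsCompOf G U' K₀ := hP1 K₀ hcK₀ hnoadj hwK₀
    have hKK' : K' = K₀ := hc'2.eq_of_mem hcomp' hy hyK₀
    rw [hKK']
    exact ⟨hcK₀, fun hcon => hcon.2 hnoadj⟩
  -- preserved components have the same edge count
  have hEpres : ∀ K₀, IsCompOf G U K₀ → degIn G K₀ v = 0 → w ∉ K₀ →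
      eBetween G K₀ T' = eBetween G K₀ T := by
    intro K₀ hc hdeg hwK
    have hdw : degIn G K₀ w = 0 := by
      by_contra hne
      obtain ⟨z, hz⟩ := Set.nonempty_of_ncard_ne_zero hne
      have hzK₀ : z ∈ K₀ := hz.2
      exact hwK (hc.adj_mem hzK₀ hz.1.symm hwU)
    have e1 : eBetween G K₀ T' = degIn G K₀ w + eBetween G K₀ (T \ {v}) :=
      eBetween_insert_right hwT' K₀
    have e2 : eBetween G K₀ T = degIn G K₀ v + eBetween G K₀ (T \ {v}) := by
      conv_lhs => rw [show T = insert v (T \ {v}) by rw [Set.insert_diff_singleton,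
        Set.insert_eq_self.2 hv]]
      exact eBetween_insert_right (fun hcon => hcon.2 rfl) K₀
    omega
  -- classification of new components
  have hclass : 𝒦' = insert Kstar (𝒦 \ Aall) := by
    ext K'
    constructor
    · intro hc'
      by_cases hvK' : v ∈ K'
      · exact Or.inl ((hc' : IsCompOf G U' K').eq_of_mem hKstarcomp hvK' hvKstar)
      · exact Or.inr (hP3 K' hc' hvK')
    · rintro (rfl | hK')
      · exact hKstarcomp
      · obtain ⟨hdeg, hwK⟩ := hnotA K' hK'
        exact hP1 K' hK'.1 hdeg hwK
  have hKstar_not : Kstar ∉ 𝒦 \ Aall := by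
    rintro ⟨hc, -⟩
    exact hvU ((hc : IsCompOf G U Kstar).subset hvKstar)
  -- counting sets
  set F : Set (Set V) := {K₀ | IsCompOf G U K₀ ∧ Odd (eBetween G K₀ T)} with hFdef
  set F' : Set (Set V) := {K₀ | IsCompOf G U' K₀ ∧ Odd (eBetween G K₀ T')} with hF'def
  set Ao : Set (Set V) := {K₀ | IsCompOf G U K₀ ∧ Odd (eBetween G K₀ T) ∧ degIn G K₀ v ≠ 0}
    with hAodef
  set a : ℕ := Ao.ncard with hadef
  have hAoF : Ao ⊆ F := fun K₀ hK₀ => ⟨hK₀.1, hK₀.2.1⟩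
  have hH : hNum G S T = F.ncard := by
    unfold hNum oddComps
    exact ncard_comp_eq (fun K₀ => Odd (eBetween G K₀ T))
  have hH' : hNum G S T' = F'.ncard := by
    unfold hNum oddComps
    rw [show ((S ∪ T')ᶜ : Set V) = U' from hcompl]
    exact ncard_comp_eq (fun K₀ => Odd (eBetween G K₀ T'))
  -- 2 ≤ a
  have h2a : 2 ≤ a := by
    have hsubset : {K₀ : Set V | IsCompOf G U K₀ ∧ Odd (eBetween G K₀ T) ∧ degIn G K₀ v = 1}
        ⊆ Ao := by
      rintro K₀ ⟨h1, h2, h3⟩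
      exact ⟨h1, h2, by omega⟩
    calc 2 ≤ _ := hCv2
    _ ≤ a := Set.ncard_le_ncard hsubset (Set.toFinite _)
  -- a ≤ deg v
  set degv : ℕ := degIn G Sᶜ v with hdegvdef
  have hadegv : a ≤ degv := by
    have hex : ∀ K₀ ∈ Ao, ∃ z, z ∈ G.neighborSet v ∩ K₀ := by
      rintro K₀ ⟨-, -, hne⟩
      exact Set.nonempty_of_ncard_ne_zero hne
    choose f hf using hex
    refine Set.ncard_le_ncard_of_injOn (fun K₀ => if h : K₀ ∈ Ao then f K₀ h else v) ?_ ?_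
      (Set.toFinite _)
    · intro K₀ hK₀
      rw [dif_pos hK₀]
      refine ⟨(hf K₀ hK₀).1, ?_⟩
      have : f K₀ hK₀ ∈ K₀ := (hf K₀ hK₀).2
      exact ((hmemU _).1 (hK₀.1.subset this)).1
    · intro K₁ h₁ K₂ h₂ heq
      dsimp only at heq
      rw [dif_pos h₁, dif_pos h₂] at heq
      exact h₁.1.eq_of_mem h₂.1 (hf K₁ h₁).2 (heq ▸ (hf K₂ h₂).2)
  -- sums over components
  have hsU : ⋃₀ 𝒦 = U := sUnion_comps
  have hsU' : ⋃₀ 𝒦' = U' := sUnion_comps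
  have hS1 : eBetween G U T = ∑ᶠ K₀ ∈ 𝒦, eBetween G K₀ T := by
    rw [← hsU]; exact eBetween_sUnion T 𝒦 comps_pairwiseDisjoint
  have hS2 : eBetween G U' T' = ∑ᶠ K₀ ∈ 𝒦', eBetween G K₀ T' := by
    rw [← hsU']; exact eBetween_sUnion T' 𝒦' comps_pairwiseDisjoint
  have hS3 : ∑ᶠ K₀ ∈ 𝒦', eBetween G K₀ T'
      = eBetween G Kstar T' + ∑ᶠ K₀ ∈ 𝒦 \ Aall, eBetween G K₀ T' := by
    rw [hclass, show insert Kstar (𝒦 \ Aall) = {Kstar} ∪ (𝒦 \ Aall) from rfl,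
      finsum_mem_union (Set.disjoint_singleton_left.2 hKstar_not) (Set.finite_singleton _)
        (Set.toFinite _), finsum_mem_singleton]
  have hS4 : ∑ᶠ K₀ ∈ 𝒦 \ Aall, eBetween G K₀ T' = ∑ᶠ K₀ ∈ 𝒦 \ Aall, eBetween G K₀ T := by
    refine finsum_mem_congr rfl ?_
    intro K₀ hK₀
    obtain ⟨hdeg, hwK⟩ := hnotA K₀ hK₀
    exact hEpres K₀ hK₀.1 hdeg hwK
  have hAall𝒦 : Aall ⊆ 𝒦 := fun K₀ hK₀ => hK₀.1
  have hS5 : ∑ᶠ K₀ ∈ 𝒦, eBetween G K₀ T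
      = (∑ᶠ K₀ ∈ Aall, eBetween G K₀ T) + ∑ᶠ K₀ ∈ 𝒦 \ Aall, eBetween G K₀ T := by
    rw [← finsum_mem_union (Set.disjoint_sdiff_right) (Set.toFinite _) (Set.toFinite _),
      Set.union_diff_cancel hAall𝒦]
  have hS6 : (∑ᶠ K₀ ∈ Aall, eBetween G K₀ T) % 2 = a % 2 := by
    rw [finsum_parity Aall (fun K₀ => eBetween G K₀ T)]
    congr 2
    ext K₀
    simp only [Set.mem_setOf_eq, hAalldef, hAodef]
    tauto
  -- edge count expansions
  have hvUw : v ∉ U \ {w} := fun h => hvU h.1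
  have hwUw : w ∉ U \ {w} := fun h => h.2 rfl
  have hvTv : v ∉ T \ {v} := fun h => h.2 rfl
  have he1 : eBetween G U' T' = degIn G T' v + (degIn G (U \ {w}) w
      + eBetween G (U \ {w}) (T \ {v})) := by
    rw [hU'def, eBetween_insert_left hvUw, eBetween_insert_right hwT']
  have he2 : eBetween G U T = degIn G T w + (degIn G (U \ {w}) v
      + eBetween G (U \ {w}) (T \ {v})) := by
    conv_lhs => rw [show U = insert w (U \ {w}) by rw [Set.insert_diff_singleton,
      Set.insert_eq_self.2 hwU]]
    rw [eBetween_insert_left hwUw]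
    congr 1
    conv_lhs => rw [show T = insert v (T \ {v}) by rw [Set.insert_diff_singleton,
      Set.insert_eq_self.2 hv]]
    rw [eBetween_insert_right hvTv]
  have he3 : degIn G T' v = degIn G {w} v + degIn G T v := by
    rw [hT'def, degIn_insert hwT', degIn_diff_self]
  have hScUT : (Sᶜ : Set V) = U ∪ T := by
    ext z
    simp only [Set.mem_compl_iff, Set.mem_union]
    constructor
    · intro hz
      by_cases hzT : z ∈ T
      · exact Or.inr hzT
      · exact Or.inl ((hmemU z).2 ⟨hz, hzT⟩)
    · rintro (hz | hz)
      · exact ((hmemU z).1 hz).1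
      · exact Set.disjoint_right.1 hDisjST hz
  have hDisjUT : Disjoint U T := by
    rw [Set.disjoint_left]
    intro z hz hzT
    exact ((hmemU z).1 hz).2 hzT
  have he4 : degv = degIn G U v + degIn G T v := by
    rw [hdegvdef, show (Sᶜ : Set V) = U ∪ T from hScUT, degIn_union hDisjUT]
  have he5 : degIn G U v = degIn G {w} v + degIn G (U \ {w}) v := by
    conv_lhs => rw [show U = insert w (U \ {w}) by rw [Set.insert_diff_singleton,
      Set.insert_eq_self.2 hwU]]
    rw [degIn_insert hwUw]
  have he6 : degIn G Sᶜ w = degIn G U w + degIn G T w := by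
    rw [show (Sᶜ : Set V) = U ∪ T from hScUT, degIn_union hDisjUT]
  have he7 : degIn G U w = degIn G (U \ {w}) w := (degIn_diff_self U w).symm
  have he9 : degIn G {w} v = degIn G {v} w := degIn_singleton_comm
  have he8 : degIn G T w = degIn G {v} w := by
    unfold degIn
    congr 1
    ext z
    simp only [Set.mem_inter_iff, mem_neighborSet, Set.mem_singleton_iff]
    constructor
    · rintro ⟨hadj, hzT⟩
      exact ⟨hadj, (hKT w z hw hzT hadj).2⟩
    · rintro ⟨hadj, rfl⟩
      exact ⟨hadj, hv⟩
  -- the parity of e(Kstar, T')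
  have hparity : (eBetween G Kstar T') % 2 = (degv + 1 + a) % 2 := by
    have hA : eBetween G U' T' = eBetween G Kstar T' + ∑ᶠ K₀ ∈ 𝒦 \ Aall, eBetween G K₀ T := by
      rw [hS2, hS3, hS4]
    have hB : eBetween G U T = (∑ᶠ K₀ ∈ Aall, eBetween G K₀ T)
        + ∑ᶠ K₀ ∈ 𝒦 \ Aall, eBetween G K₀ T := by
      rw [hS1, hS5]
    omega
  -- cardinalities of F and F'
  have hFAo : (F \ Ao).ncard + a = F.ncard := by
    have h1 : (F \ Ao).ncard = F.ncard - a := Set.ncard_diff hAoF (Set.toFinite _)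
    have h2 : a ≤ F.ncard := Set.ncard_le_ncard hAoF (Set.toFinite _)
    omega
  have hFAo_sub : F \ Ao ⊆ 𝒦 \ Aall := by
    rintro K₀ ⟨hF₀, hnAo⟩
    refine ⟨hF₀.1, fun hcon => hnAo ⟨hF₀.1, hF₀.2, hcon.2⟩⟩
  have hF'eq : ∀ ε : ℕ, (Odd (eBetween G Kstar T') → ε = 1) →
      (¬ Odd (eBetween G Kstar T') → ε = 0) → F'.ncard = (F \ Ao).ncard + ε := by
    intro ε hε1 hε0
    by_cases hodd : Odd (eBetween G Kstar T')
    · rw [hε1 hodd]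
      have : F' = insert Kstar (F \ Ao) := by
        ext K'
        constructor
        · rintro ⟨hc', hodd'⟩
          have hmem : K' ∈ insert Kstar (𝒦 \ Aall) := by rw [← hclass]; exact hc'
          rcases Set.mem_insert_iff.1 hmem with rfl | hK'
          · exact Or.inl rfl
          · obtain ⟨hdeg, hwK⟩ := hnotA K' hK'
            have hepres := hEpres K' hK'.1 hdeg hwK
            exact Or.inr ⟨⟨hK'.1, hepres ▸ hodd'⟩, fun hcon => hcon.2.2 hdeg⟩
        · rintro (rfl | hK')
          · exact ⟨hKstarcomp, hodd⟩
          · obtain ⟨hdeg, hwK⟩ := hnotA K' (hFAo_sub hK')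
            have hepres := hEpres K' hK'.1.1 hdeg hwK
            exact ⟨hP1 K' hK'.1.1 hdeg hwK, hepres ▸ hK'.1.2⟩
      rw [this, Set.ncard_insert_of_notMem (fun hcon => hKstar_not (hFAo_sub hcon))
        (Set.toFinite _)]
    · rw [hε0 hodd]
      have : F' = F \ Ao := by
        ext K'
        constructor
        · rintro ⟨hc', hodd'⟩
          have hmem : K' ∈ insert Kstar (𝒦 \ Aall) := by rw [← hclass]; exact hc'
          rcases Set.mem_insert_iff.1 hmem with rfl | hK'
          · exact absurd hodd' hodd
          · obtain ⟨hdeg, hwK⟩ := hnotA K' hK'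
            have hepres := hEpres K' hK'.1 hdeg hwK
            exact ⟨⟨hK'.1, hepres ▸ hodd'⟩, fun hcon => hcon.2.2 hdeg⟩
        · rintro hK'
          obtain ⟨hdeg, hwK⟩ := hnotA K' (hFAo_sub hK')
          have hepres := hEpres K' hK'.1.1 hdeg hwK
          exact ⟨hP1 K' hK'.1.1 hdeg hwK, hepres ▸ hK'.1.2⟩
      rw [this]
      omega
  -- the new pair is a barrier of the same size
  have hT'card : T'.ncard = T.ncard := by
    rw [hT'def, Set.ncard_insert_of_notMem hwT' (Set.toFinite _),
      Set.ncard_diff_singleton_add_one hv (Set.toFinite _)]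
  have hUnioncard : (S ∪ T').ncard = (S ∪ T).ncard := by
    have h1 : S ∪ T' = insert w ((S ∪ T) \ {v}) := by
      rw [hT'def]
      ext z
      simp only [Set.mem_union, Set.mem_insert_iff, Set.mem_diff, Set.mem_singleton_iff]
      constructor
      · rintro (hz | rfl | ⟨hz, hzv⟩)
        · exact Or.inr ⟨Or.inl hz, fun hcon => hvS (hcon ▸ hz)⟩
        · exact Or.inl rfl
        · exact Or.inr ⟨Or.inr hz, hzv⟩
      · rintro (rfl | ⟨hz | hz, hzv⟩)
        · exact Or.inr (Or.inl rfl)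
        · exact Or.inl hz
        · exact Or.inr (Or.inr ⟨hz, hzv⟩)
    rw [h1, Set.ncard_insert_of_notMem (fun hcon => ?_) (Set.toFinite _),
      Set.ncard_diff_singleton_add_one (Set.mem_union_right S hv) (Set.toFinite _)]
    rcases hcon.1 with h | h
    · exact hwS h
    · exact hwT h
  have hdisj' : Disjoint S T' := by
    rw [hT'def, Set.disjoint_left]
    rintro z hzS (rfl | hzT)
    · exact hwS hzS
    · exact Set.disjoint_left.1 hDisjST hzS hzT.1
  -- finsum over T'
  have hsumT' : (∑ᶠ t ∈ T', (degIn G Sᶜ t : ℤ))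
      = (∑ᶠ t ∈ T, (degIn G Sᶜ t : ℤ)) - degv + 1 := by
    have h1 : (∑ᶠ t ∈ T', (degIn G Sᶜ t : ℤ))
        = (degIn G Sᶜ w : ℤ) + ∑ᶠ t ∈ T \ {v}, (degIn G Sᶜ t : ℤ) := by
      rw [hT'def, show insert w (T \ {v}) = {w} ∪ (T \ {v}) from rfl,
        finsum_mem_union (Set.disjoint_singleton_left.2 hwT') (Set.finite_singleton _)
          (Set.toFinite _), finsum_mem_singleton]
    have h2 : (∑ᶠ t ∈ T, (degIn G Sᶜ t : ℤ))
        = (degIn G Sᶜ v : ℤ) + ∑ᶠ t ∈ T \ {v}, (degIn G Sᶜ t : ℤ) := by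
      conv_lhs => rw [show T = insert v (T \ {v}) by rw [Set.insert_diff_singleton,
        Set.insert_eq_self.2 hv]]
      rw [show insert v (T \ {v}) = {v} ∪ (T \ {v}) from rfl,
        finsum_mem_union (Set.disjoint_singleton_left.2 hvTv) (Set.finite_singleton _)
          (Set.toFinite _), finsum_mem_singleton]
    rw [h1, h2, hdegScw1, ← hdegvdef]
    push_cast
    ring
  -- delta computation
  have hdelta : deltaST G S T' = deltaST G S T + (1 - (degv : ℤ))
      + ((F.ncard : ℤ) - (F'.ncard : ℤ)) := by
    unfold deltaST
    rw [hT'card, hsumT', hH, hH']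
    push_cast
    ring
  have hdelta_le : deltaST G S T' ≤ deltaST G S T := by
    rw [hdelta]
    by_cases hodd : Odd (eBetween G Kstar T')
    · have hF' := hF'eq 1 (fun _ => rfl) (fun hc => absurd hodd hc)
      have h1 : (F'.ncard : ℤ) = (F.ncard : ℤ) - a + 1 := by
        rw [hF']
        have := hFAo
        push_cast
        omega
      rw [h1]
      have : (a : ℤ) ≤ degv := by exact_mod_cast hadegv
      linarith
    · have hF' := hF'eq 0 (fun hc => absurd hc hodd) (fun _ => rfl)
      have heps : (eBetween G Kstar T') % 2 = 0 := by
        rcases Nat.even_or_odd (eBetween G Kstar T') with he | ho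
        · exact Nat.even_iff.1 he
        · exact absurd ho hodd
      have hlt' : a < degv := by
        have hne : a ≠ degv := by
          intro hcon
          rw [hcon] at hparity
          omega
        omega
      have h1 : (F'.ncard : ℤ) = (F.ncard : ℤ) - a := by
        rw [hF']
        have := hFAo
        push_cast
        omega
      rw [h1]
      have : (a : ℤ) < degv := by exact_mod_cast hlt'
      linarith
  have hbarrier' : IsBarrier G S T' := ⟨hdisj', le_trans hdelta_le hmin.1.2⟩
  have hminbarrier' : IsMinBarrier G S T' :=
    ⟨hbarrier', fun S'' T'' hb => hUnioncard ▸ hmin.2 S'' T'' hb⟩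
  have hcontr := hh S T' hminbarrier'
  rw [hH, hH'] at hcontr
  have hF'le : F'.ncard ≤ (F \ Ao).ncard + 1 := by
    by_cases hodd : Odd (eBetween G Kstar T')
    · rw [hF'eq 1 (fun _ => rfl) (fun hc => absurd hodd hc)]
    · rw [hF'eq 0 (fun hc => absurd hc hodd) (fun _ => rfl)]; omega
  omega

theorem vizing_stmt_10 [Fintype V] (G : SimpleGraph V) (S T : Set V)
    (hG : ¬ HasTwoFactor G) (hmin : IsMinBarrier G S T)
    (hh : ∀ S' T' : Set V, IsMinBarrier G S' T' → hNum G S T ≤ hNum G S' T')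
    (v : V) (hv : v ∈ T)
    (hCv : 2 ≤ {C ∈ oddComps G S T | degIn G (csupp G (S ∪ T)ᶜ C) v = 1}.ncard)
    (hC1v : 1 ≤ {C ∈ oddComps G S T | eBetween G (csupp G (S ∪ T)ᶜ C) T = 1 ∧
      degIn G (csupp G (S ∪ T)ᶜ C) v = 1}.ncard) :
    ∀ D ∈ {C ∈ oddComps G S T | eBetween G (csupp G (S ∪ T)ᶜ C) T = 1 ∧
        degIn G (csupp G (S ∪ T)ᶜ C) v = 1},
      ∀ w ∈ csupp G (S ∪ T)ᶜ D,
        2 ≤ degIn G (csupp G (S ∪ T)ᶜ D ∪ {v}) w := by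
  classical
  intro D hD w hw
  obtain ⟨hDodd, hDe, hDv⟩ := hD
  have hCv2 : 2 ≤ {K₀ : Set V | IsCompOf G (S ∪ T)ᶜ K₀ ∧ Odd (eBetween G K₀ T)
      ∧ degIn G K₀ v = 1}.ncard := by
    have hb : {C ∈ oddComps G S T | degIn G (csupp G (S ∪ T)ᶜ C) v = 1}.ncard
        = {K₀ : Set V | IsCompOf G (S ∪ T)ᶜ K₀
            ∧ (Odd (eBetween G K₀ T) ∧ degIn G K₀ v = 1)}.ncard := by
      rw [show {C ∈ oddComps G S T | degIn G (csupp G (S ∪ T)ᶜ C) v = 1}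
          = {C : (G.induce (S ∪ T)ᶜ).ConnectedComponent |
              (fun K₀ => Odd (eBetween G K₀ T) ∧ degIn G K₀ v = 1) (csupp G (S ∪ T)ᶜ C)} by
        ext C; exact Iff.rfl]
      exact ncard_comp_eq (G := G) (U := (S ∪ T)ᶜ)
        (fun K₀ => Odd (eBetween G K₀ T) ∧ degIn G K₀ v = 1)
    calc 2 ≤ _ := hCv
    _ = _ := hb
  exact core G S T hmin hh v hv hCv2 (csupp G (S ∪ T)ᶜ D) (csupp_isCompOf D) hDe hDv w hw

end VizingTwoFactor
end

section
/- Let G be an n-vertex Δ-critical graph with Δ ≥ n/2, without a 2-factor, and let (S,T) be a minimum barrier with h_G(S,T) smallest. Suppose |S| < |T|, T is independent, vertices of T send no edges to even components and at most one edge to each odd component of G−(S∪T). If C is an odd component containing a vertex x with deg_G(x) = Δ and e_G(x,T) ≤ 1, then |V(C)| > |V(𝒞_{≥1})|/2, where V(𝒞_{≥1}) is the union of vertex sets of all odd components. -/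
open SimpleGraph

namespace VizingTwoFactor

variable {V : Type*}

theorem vizing_stmt_15 [Fintype V] (G : SimpleGraph V) (Δ : ℕ)
    (hcrit : IsDeltaCritical G Δ) (hΔ : Fintype.card V ≤ 2 * Δ)
    (hG : ¬ HasTwoFactor G) (S T : Set V) (hmin : IsMinBarrier G S T)
    (hh : ∀ S' T' : Set V, IsMinBarrier G S' T' → hNum G S T ≤ hNum G S' T')
    (hST : S.ncard < T.ncard) (hTind : IsIndep G T)
    (heven : ∀ C : (G.induce (S ∪ T)ᶜ).ConnectedComponent,
      Even (eBetween G (csupp G (S ∪ T)ᶜ C) T) →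
      eBetween G (csupp G (S ∪ T)ᶜ C) T = 0)
    (hodd1 : ∀ C ∈ oddComps G S T, ∀ v ∈ T, degIn G (csupp G (S ∪ T)ᶜ C) v ≤ 1)
    (C : (G.induce (S ∪ T)ᶜ).ConnectedComponent) (hC : C ∈ oddComps G S T)
    (x : V) (hx : x ∈ csupp G (S ∪ T)ᶜ C)
    (hxdeg : ndeg G x = Δ) (hxT : degIn G T x ≤ 1) :
    {v : V | ∃ D ∈ oddComps G S T, v ∈ csupp G (S ∪ T)ᶜ D}.ncard <
      2 * (csupp G (S ∪ T)ᶜ C).ncard := by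
  classical
  set W : Set V := {v : V | ∃ D ∈ oddComps G S T, v ∈ csupp G (S ∪ T)ᶜ D} with hW
  obtain ⟨x', hx'C, hx'val⟩ := hx
  have hxU : x ∈ (S ∪ T)ᶜ := hx'val ▸ x'.2
  -- neighbors of x lie in S ∪ T ∪ (csupp C \ {x})
  have hnbr : G.neighborSet x ⊆ S ∪ T ∪ (csupp G (S ∪ T)ᶜ C \ {x}) := by
    intro y hy
    by_cases hyST : y ∈ S ∪ T
    · exact Or.inl hyST
    · right
      have hyU : y ∈ (S ∪ T)ᶜ := hyST
      refine ⟨⟨⟨y, hyU⟩, ?_, rfl⟩, fun h => G.ne_of_adj hy (h.symm)⟩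
      have hadj : (G.induce (S ∪ T)ᶜ).Adj ⟨x, hxU⟩ ⟨y, hyU⟩ := by
        simpa using hy
      have hxx' : (⟨x, hxU⟩ : ((S ∪ T)ᶜ : Set V)) = x' := Subtype.ext hx'val.symm
      have hxc : (G.induce (S ∪ T)ᶜ).connectedComponentMk ⟨x, hxU⟩ = C := by
        rw [hxx']; exact hx'C
      have : (G.induce (S ∪ T)ᶜ).connectedComponentMk ⟨y, hyU⟩ = C := by
        rw [← hxc]
        exact (SimpleGraph.ConnectedComponent.connectedComponentMk_eq_of_adj hadj.symm)
      exact this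
  have hxC : x ∈ csupp G (S ∪ T)ᶜ C := ⟨x', hx'C, hx'val⟩
  have hCfin : (csupp G (S ∪ T)ᶜ C).Finite := Set.toFinite _
  have hCpos : 1 ≤ (csupp G (S ∪ T)ᶜ C).ncard := (Set.ncard_pos hCfin).2 ⟨x, hxC⟩
  -- degree bound: Δ ≤ |S| + degIn T x + (|C| - 1)
  have hdeg : Δ ≤ S.ncard + degIn G T x + ((csupp G (S ∪ T)ᶜ C).ncard - 1) := by
    have h1 : G.neighborSet x ⊆ (G.neighborSet x ∩ S) ∪ (G.neighborSet x ∩ T)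
        ∪ (csupp G (S ∪ T)ᶜ C \ {x}) := by
      intro y hy
      rcases hnbr hy with (h | h) | h
      · exact Or.inl (Or.inl ⟨hy, h⟩)
      · exact Or.inl (Or.inr ⟨hy, h⟩)
      · exact Or.inr h
    calc Δ = (G.neighborSet x).ncard := hxdeg.symm
      _ ≤ ((G.neighborSet x ∩ S) ∪ (G.neighborSet x ∩ T) ∪ (csupp G (S ∪ T)ᶜ C \ {x})).ncard :=
          Set.ncard_le_ncard h1 (Set.toFinite _)
      _ ≤ ((G.neighborSet x ∩ S) ∪ (G.neighborSet x ∩ T)).ncard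
            + (csupp G (S ∪ T)ᶜ C \ {x}).ncard := Set.ncard_union_le _ _
      _ ≤ (G.neighborSet x ∩ S).ncard + (G.neighborSet x ∩ T).ncard
            + (csupp G (S ∪ T)ᶜ C \ {x}).ncard := by
          exact Nat.add_le_add_right (Set.ncard_union_le _ _) _
      _ ≤ S.ncard + degIn G T x + ((csupp G (S ∪ T)ᶜ C).ncard - 1) := by
          refine Nat.add_le_add (Nat.add_le_add ?_ le_rfl) ?_
          · exact Set.ncard_le_ncard Set.inter_subset_right (Set.toFinite _)
          · rw [Set.ncard_diff_singleton_of_mem hxC]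
  have hdeg2 : Δ ≤ S.ncard + (csupp G (S ∪ T)ᶜ C).ncard := by
    have := Nat.add_le_add hdeg (le_refl 0)
    omega
  -- counting: |S| + |T| + |W| ≤ card V
  have hWU : W ⊆ (S ∪ T)ᶜ := by
    rintro v ⟨D, hD, ⟨d, hdD, hdval⟩⟩
    exact hdval ▸ d.2
  have hdisjS : Disjoint S W := by
    refine Set.disjoint_left.2 fun a haS haW => (hWU haW) (Or.inl haS)
  have hdisjT : Disjoint T W := by
    refine Set.disjoint_left.2 fun a haT haW => (hWU haW) (Or.inr haT)
  have hdisjST : Disjoint S T := hmin.1.1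
  have hcard : S.ncard + T.ncard + W.ncard ≤ Fintype.card V := by
    have h1 : (S ∪ T ∪ W).ncard = S.ncard + T.ncard + W.ncard := by
      rw [Set.ncard_union_eq (by exact Set.disjoint_union_left.2 ⟨hdisjS, hdisjT⟩)
        (Set.toFinite _) (Set.toFinite _),
        Set.ncard_union_eq hdisjST (Set.toFinite _) (Set.toFinite _)]
    calc S.ncard + T.ncard + W.ncard = (S ∪ T ∪ W).ncard := h1.symm
      _ ≤ (Set.univ : Set V).ncard := Set.ncard_le_ncard (Set.subset_univ _) (Set.toFinite _)
      _ = Fintype.card V := by rw [Set.ncard_univ, Nat.card_eq_fintype_card]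
  omega

end VizingTwoFactor
end
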